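/- Let λ_d, λ, ρ ∈ F* with λ ≠ λ_d, and set β = (λ_d + 1)/ρ + 1. Then the two point sets C_λ = {(x1,x2,x3) : x1² + x1x3 + x3² + λ²x2² = 0} and C = {(x1,x2,x3) : x1² + x1x3 + β²x3² + λ_d²x2² = 0} in PG(2,q) are disjoint if and only if Tr[1 + λ²(λ_d + 1)²/(ρ²(λ_d + λ)²)] = 1. -/

import Mathlib

/-!
STATEMENT 16: The trace condition for extending a Denniston arc (Section 5 of
the paper).  With `β = (λd + 1)/ρ + 1`, the conics
`C_λ : x1² + x1x3 + x3² + λ²x2² = 0` and `C : x1² + x1x3 + β²x3² + λd²x2² = 0`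
in `PG(2,q)` are disjoint if and only if
`Tr[1 + λ²(λd + 1)²/(ρ²(λd + λ)²)] = 1`.
-/

open Projectivization

noncomputable section

abbrev F (h : ℕ) : Type := GaloisField 2 h

/-- The absolute trace map from `GF(2^h)` onto `GF(2)`. -/
def Tr {h : ℕ} (x : F h) : ZMod 2 := Algebra.trace (ZMod 2) (F h) x

/-- Points of the Desarguesian projective plane `PG(2, 2^h)`,
written as triples `(x1, x2, x3)`. -/
abbrev Pt (h : ℕ) := Projectivization (F h) (Fin 3 → F h)

noncomputable def frobAlg (h : ℕ) : F h ≃ₐ[ZMod 2] F h :=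
  AlgEquiv.ofRingEquiv (f := frobeniusEquiv (F h) 2) (fun c => by
    show (algebraMap (ZMod 2) (F h) c) ^ 2 = _
    rw [← map_pow]; congr 1; revert c; decide)

theorem tr_sq (h : ℕ) (x : F h) :
    Algebra.trace (ZMod 2) (F h) (x ^ 2) = Algebra.trace (ZMod 2) (F h) x := by
  have := Algebra.trace_eq_of_algEquiv (frobAlg h) x
  simpa [frobAlg, frobeniusEquiv_def, AlgEquiv.ofRingEquiv, frobenius_def] using this

noncomputable def ASmap (h : ℕ) : F h →ₗ[ZMod 2] F h where
  toFun x := x ^ 2 + x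
  map_add' x y := by
    show (x + y) ^ 2 + (x + y) = (x ^ 2 + x) + (y ^ 2 + y)
    linear_combination CharTwo.add_sq x y
  map_smul' c x := by
    have hd : ∀ d : ZMod 2, d = 0 ∨ d = 1 := by decide
    rcases hd c with rfl | rfl <;> simp

theorem AS (h : ℕ) (a : F h) :
    (∃ u : F h, u ^ 2 + u = a) ↔ Algebra.trace (ZMod 2) (F h) a = 0 := by
  have two : (2 : F h) = 0 := CharTwo.two_eq_zero
  have hker : LinearMap.ker (ASmap h) = Submodule.span (ZMod 2) {(1 : F h)} := by
    ext x
    simp only [LinearMap.mem_ker, ASmap, LinearMap.coe_mk, AddHom.coe_mk,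
      Submodule.mem_span_singleton]
    constructor
    · intro hx
      have : x * (x + 1) = 0 := by linear_combination hx
      rcases mul_eq_zero.mp this with hx0 | hx1
      · exact ⟨0, by simp [hx0]⟩
      · exact ⟨1, by
          have hx : x = 1 := by linear_combination hx1 - two
          simp [hx]⟩
    · rintro ⟨c, rfl⟩
      have hd : ∀ d : ZMod 2, d = 0 ∨ d = 1 := by decide
      rcases hd c with rfl | rfl <;> simp
      linear_combination two
  have hkerrank : Module.finrank (ZMod 2) (LinearMap.ker (ASmap h)) = 1 := by
    rw [hker]; exact finrank_span_singleton one_ne_zero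
  set T := Algebra.trace (ZMod 2) (F h) with hT
  have hTsurj : ∃ y : F h, T y ≠ 0 := by
    by_contra hc
    push_neg at hc
    have hnd := traceForm_nondegenerate (ZMod 2) (F h)
    have := hnd.1 1 (fun y => by simpa [Algebra.traceForm_apply] using hc y)
    exact one_ne_zero this
  have hrangeT : LinearMap.range T = ⊤ := by
    obtain ⟨y, hy⟩ := hTsurj
    rw [Submodule.eq_top_iff']
    intro c
    have hy1 : T y = 1 := by
      have : ∀ d : ZMod 2, d ≠ 0 → d = 1 := by decide
      exact this _ hy
    exact ⟨c • y, by rw [map_smul, hy1, smul_eq_mul, mul_one]⟩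
  have hrankT : Module.finrank (ZMod 2) (LinearMap.range T) = 1 := by
    rw [hrangeT, finrank_top]; exact Module.finrank_self _
  have hle : LinearMap.range (ASmap h) ≤ LinearMap.ker T := by
    rintro _ ⟨x, rfl⟩
    show T ((fun x => x ^ 2 + x) x) = 0
    simp only []
    rw [map_add, hT, tr_sq]
    exact CharTwo.add_self_eq_zero _
  have e1 := LinearMap.finrank_range_add_finrank_ker (ASmap h)
  have e2 := LinearMap.finrank_range_add_finrank_ker T
  have heq : LinearMap.range (ASmap h) = LinearMap.ker T :=
    Submodule.eq_of_le_of_finrank_eq hle (by omega)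
  constructor
  · rintro ⟨u, rfl⟩
    have : u ^ 2 + u ∈ LinearMap.ker T := heq ▸ ⟨u, rfl⟩
    simpa using this
  · intro ha
    have : a ∈ LinearMap.range (ASmap h) := heq ▸ (LinearMap.mem_ker.mpr ha)
    obtain ⟨u, hu⟩ := this
    exact ⟨u, hu⟩

/-- The quadratic form. -/
def Qf {h : ℕ} (b c : F h) (v : Fin 3 → F h) : F h :=
  v 0 ^ 2 + v 0 * v 2 + b * v 2 ^ 2 + c * v 1 ^ 2

theorem Qf_smul {h : ℕ} (b c : F h) (a : (F h)ˣ) (v : Fin 3 → F h) :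
    Qf b c ((a : F h) • v) = (a : F h) ^ 2 * Qf b c v := by
  simp only [Qf, Pi.smul_apply, smul_eq_mul]
  ring

theorem Qf_rep_iff {h : ℕ} (b c : F h) (v : Fin 3 → F h) (hv : v ≠ 0) :
    Qf b c ((Projectivization.mk (F h) v hv).rep) = 0 ↔ Qf b c v = 0 := by
  obtain ⟨a, ha⟩ := (Projectivization.mk_eq_mk_iff (F h) _ _
      (Projectivization.rep_nonzero _) hv).mp
      (Projectivization.mk_rep (Projectivization.mk (F h) v hv))
  rw [← ha, Units.smul_def, Qf_smul]
  constructor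
  · intro h0
    rcases mul_eq_zero.mp h0 with h0 | h0
    · exact absurd h0 (pow_ne_zero 2 a.ne_zero)
    · exact h0
  · intro h0; rw [h0, mul_zero]

theorem stmt16 (h : ℕ) (hh : h ≠ 0) (lamd lam ρ : F h)
    (hlamd : lamd ≠ 0) (hlam : lam ≠ 0) (hρ : ρ ≠ 0) (hne : lam ≠ lamd) :
    Disjoint
      {P : Pt h | P.rep 0 ^ 2 + P.rep 0 * P.rep 2 + P.rep 2 ^ 2 +
        lam ^ 2 * P.rep 1 ^ 2 = 0}
      {P : Pt h | P.rep 0 ^ 2 + P.rep 0 * P.rep 2 +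
        ((lamd + 1) / ρ + 1) ^ 2 * P.rep 2 ^ 2 + lamd ^ 2 * P.rep 1 ^ 2 = 0} ↔
    Tr (1 + lam ^ 2 * (lamd + 1) ^ 2 / (ρ ^ 2 * (lamd + lam) ^ 2)) = 1 := by
  classical
  have two : (2 : F h) = 0 := CharTwo.two_eq_zero
  set b : F h := (lamd + 1) / ρ + 1 with hbdef
  set arg : F h := 1 + lam ^ 2 * (lamd + 1) ^ 2 / (ρ ^ 2 * (lamd + lam) ^ 2) with hargdef
  have hsne : lamd + lam ≠ 0 := fun hz => hne (by linear_combination hz - lamd * two)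
  -- key equivalence
  have key : (∃ v : Fin 3 → F h, v ≠ 0 ∧ Qf 1 (lam ^ 2) v = 0 ∧
      Qf (b ^ 2) (lamd ^ 2) v = 0) ↔ (∃ u : F h, u ^ 2 + u = arg) := by
    by_cases he : lamd + 1 = 0
    · -- degenerate case lamd = 1
      have hlamd1 : lamd = 1 := by linear_combination he - two
      have hb1 : b = 1 := by rw [hbdef, he]; simp
      have harg : arg = 1 := by rw [hargdef, he]; simp
      rw [harg]
      constructor
      · rintro ⟨v, hv, h1, h2⟩
        simp only [Qf] at h1 h2
        rw [hb1, hlamd1] at h2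
        have E : ((lam + 1) * v 1) ^ 2 = 0 := by
          linear_combination h1 - h2 + (lam * v 1 ^ 2 + v 1 ^ 2) * two
        have h3 : (lam + 1) * v 1 = 0 := by
          exact sq_eq_zero_iff.mp E
        have hv1 : v 1 = 0 := by
          rcases mul_eq_zero.mp h3 with h4 | h4
          · exact absurd (show lam = lamd by
              rw [hlamd1]; linear_combination h4 - two) hne
          · exact h4
        have hv2 : v 2 ≠ 0 := by
          intro hz
          apply hv
          rw [hv1, hz] at h1
          have hv0 : v 0 = 0 := by
            have : v 0 ^ 2 = 0 := by linear_combination h1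
            exact sq_eq_zero_iff.mp this
          funext i; fin_cases i <;> simp [hv0, hv1, hz]
        refine ⟨v 0 / v 2, ?_⟩
        rw [hv1] at h1
        field_simp
        linear_combination h1 - v 2 ^ 2 * two
      · rintro ⟨u, hu⟩
        refine ⟨![u, 0, 1], ?_, ?_, ?_⟩
        · intro hz; simpa using congrFun hz 2
        · show (![u, 0, 1] 0) ^ 2 + (![u, 0, 1] 0) * (![u, 0, 1] 2) +
            1 * (![u, 0, 1] 2) ^ 2 + lam ^ 2 * (![u, 0, 1] 1) ^ 2 = 0
          simp only [Matrix.cons_val_zero, Matrix.cons_val_one, Matrix.head_cons,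
            Matrix.cons_val_two, Matrix.tail_cons]
          linear_combination hu + two
        · show (![u, 0, 1] 0) ^ 2 + (![u, 0, 1] 0) * (![u, 0, 1] 2) +
            b ^ 2 * (![u, 0, 1] 2) ^ 2 + lamd ^ 2 * (![u, 0, 1] 1) ^ 2 = 0
          simp only [Matrix.cons_val_zero, Matrix.cons_val_one, Matrix.head_cons,
            Matrix.cons_val_two, Matrix.tail_cons]
          rw [hb1, hlamd1]
          linear_combination hu + two
    · -- main case lamd ≠ 1
      set c : F h := ρ * (lamd + lam) / (lamd + 1) with hcdef
      have hc2 : c * (lamd + 1) = ρ * (lamd + lam) := by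
        rw [hcdef]; field_simp
      have hc0 : c ≠ 0 := by
        rw [hcdef]; exact div_ne_zero (mul_ne_zero hρ hsne) he
      have hb2 : ρ ^ 2 * b ^ 2 = (lamd + 1 + ρ) ^ 2 := by
        rw [hbdef]; field_simp
      have harg : arg = 1 + lam ^ 2 / c ^ 2 := by
        rw [hargdef]
        congr 1
        rw [div_eq_div_iff (mul_ne_zero (pow_ne_zero 2 hρ) (pow_ne_zero 2 hsne))
          (pow_ne_zero 2 hc0)]
        linear_combination lam ^ 2 * (c * (lamd + 1) + ρ * (lamd + lam)) * hc2
      rw [harg]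
      constructor
      · rintro ⟨v, hv, h1, h2⟩
        simp only [Qf] at h1 h2
        have E : ((lamd + 1) * v 2 + ρ * (lamd + lam) * v 1) ^ 2 = 0 := by
          linear_combination ρ ^ 2 * (h2 - h1) - v 2 ^ 2 * hb2 +
            (-(ρ * (lamd + 1)) * v 2 ^ 2 + ρ ^ 2 * lam * (lam + lamd) * v 1 ^ 2 +
              ρ * (lamd + 1) * (lamd + lam) * v 1 * v 2) * two
        have S : (lamd + 1) * v 2 + ρ * (lamd + lam) * v 1 = 0 := sq_eq_zero_iff.mp E
        have h4 : (lamd + 1) * v 2 = (lamd + 1) * (c * v 1) := by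
          linear_combination S - v 1 * hc2 - ρ * (lamd + lam) * v 1 * two
        have hveq2 : v 2 = c * v 1 := mul_left_cancel₀ he h4
        have hv1ne : v 1 ≠ 0 := by
          intro hz
          apply hv
          have h5 : v 2 = 0 := by rw [hveq2, hz, mul_zero]
          rw [hz, h5] at h1
          have hv0 : v 0 = 0 := by
            have : v 0 ^ 2 = 0 := by linear_combination h1
            exact sq_eq_zero_iff.mp this
          funext i; fin_cases i <;> simp [hv0, hz, h5]
        refine ⟨v 0 / (c * v 1), ?_⟩
        rw [hveq2] at h1
        clear_value c
        field_simp
        linear_combination h1 - v 1 ^ 2 * (c ^ 2 + lam ^ 2) * two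
      · rintro ⟨u, hu⟩
        have hu' : c ^ 2 * u ^ 2 + c ^ 2 * u = c ^ 2 + lam ^ 2 := by
          field_simp at hu
          linear_combination hu
        refine ⟨![c * u, 1, c], ?_, ?_, ?_⟩
        · intro hz; simpa using congrFun hz 1
        · show (![c * u, 1, c] 0) ^ 2 + (![c * u, 1, c] 0) * (![c * u, 1, c] 2) +
            1 * (![c * u, 1, c] 2) ^ 2 + lam ^ 2 * (![c * u, 1, c] 1) ^ 2 = 0
          simp only [Matrix.cons_val_zero, Matrix.cons_val_one, Matrix.head_cons,
            Matrix.cons_val_two, Matrix.tail_cons]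
          linear_combination hu' + (c ^ 2 + lam ^ 2) * two
        · show (![c * u, 1, c] 0) ^ 2 + (![c * u, 1, c] 0) * (![c * u, 1, c] 2) +
            b ^ 2 * (![c * u, 1, c] 2) ^ 2 + lamd ^ 2 * (![c * u, 1, c] 1) ^ 2 = 0
          simp only [Matrix.cons_val_zero, Matrix.cons_val_one, Matrix.head_cons,
            Matrix.cons_val_two, Matrix.tail_cons]
          have hQ : ρ ^ 2 * ((c * u) ^ 2 + (c * u) * c + b ^ 2 * c ^ 2 +
              lamd ^ 2 * 1 ^ 2) = 0 := by
            linear_combination ρ ^ 2 * hu' + c ^ 2 * hb2 +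
              (c * (lamd + 1) + ρ * (lamd + lam)) * hc2 +
              (ρ ^ 2 * (lamd ^ 2 + lam ^ 2 + lamd * lam) +
                (ρ * (lamd + 1) + ρ ^ 2) * c ^ 2) * two
          have := (mul_eq_zero.mp hQ).resolve_left (pow_ne_zero 2 hρ)
          linear_combination this
  -- translate disjointness
  have hmem1 : ∀ P : Pt h, (P ∈ {P : Pt h | P.rep 0 ^ 2 + P.rep 0 * P.rep 2 +
      P.rep 2 ^ 2 + lam ^ 2 * P.rep 1 ^ 2 = 0}) ↔ Qf 1 (lam ^ 2) P.rep = 0 := by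
    intro P
    simp only [Set.mem_setOf_eq, Qf, one_mul]
  have hmem2 : ∀ P : Pt h, (P ∈ {P : Pt h | P.rep 0 ^ 2 + P.rep 0 * P.rep 2 +
      b ^ 2 * P.rep 2 ^ 2 + lamd ^ 2 * P.rep 1 ^ 2 = 0}) ↔
      Qf (b ^ 2) (lamd ^ 2) P.rep = 0 := by
    intro P
    simp only [Set.mem_setOf_eq, Qf]
  have hzmod : ∀ d : ZMod 2, d = 1 ↔ ¬ d = 0 := by decide
  have trarg : (∃ u : F h, u ^ 2 + u = arg) ↔ Tr arg = 0 := AS h arg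
  constructor
  · intro hdisj
    rw [hzmod]
    intro h0
    obtain ⟨v, hv, h1, h2⟩ := key.mpr (trarg.mpr h0)
    have hP1 := (hmem1 (Projectivization.mk (F h) v hv)).mpr ((Qf_rep_iff _ _ v hv).mpr h1)
    have hP2 := (hmem2 (Projectivization.mk (F h) v hv)).mpr ((Qf_rep_iff _ _ v hv).mpr h2)
    exact Set.disjoint_left.mp hdisj hP1 hP2
  · intro htr
    rw [Set.disjoint_left]
    intro P hP1 hP2
    have h0 : Tr arg = 0 := trarg.mp (key.mp
      ⟨P.rep, P.rep_nonzero, (hmem1 P).mp hP1, (hmem2 P).mp hP2⟩)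
    rw [htr] at h0
    exact one_ne_zero h0
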